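/- Define F : ℝ → Set ℝ by F(x) = {2} for x < 0, F(0) = [−1, 2], and F(x) = {−1} for x > 0, and let X_o = [−2, 0] and X_u = ℝ \ X_o. Then (i) the system ẋ ∈ F(x) + 𝔹 is safe with respect to (X_o, X_u), so ẋ ∈ F(x) is robustly safe with respect to (X_o, X_u); and (ii) for every continuous function ε : ℝ → (0,∞), the strongly perturbed system Σ^s_ε is not safe with respect to (X_o, X_u), so ẋ ∈ F(x) is not strongly robustly safe with respect to (X_o, X_u). -/

import Mathlib

open Metric Set Filter MeasureTheory
open scoped Pointwise RealInnerProductSpace Topology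

variable {E : Type*} [NormedAddCommGroup E] [NormedSpace ℝ E]

/-- Admissible solution domains: `[0,T]`, `[0,T)`, or `[0,∞)`. -/
def SolDomain (D : Set ℝ) : Prop :=
  (∃ T : ℝ, 0 ≤ T ∧ D = Set.Icc 0 T) ∨ (∃ T : ℝ, 0 < T ∧ D = Set.Ico 0 T) ∨ D = Set.Ici 0

/-- `φ` is a (locally absolutely continuous) solution of `ẋ ∈ F x` on `D`,
expressed in integral form: `φ t = φ 0 + ∫₀ᵗ v`, with `v t ∈ F (φ t)` a.e. on `D`. -/
def IsSolutionOn (F : E → Set E) (φ : ℝ → E) (D : Set ℝ) : Prop :=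
  SolDomain D ∧ ∃ v : ℝ → E,
    (∀ t ∈ D, MeasureTheory.IntegrableOn v (Set.Icc 0 t)) ∧
    (∀ t ∈ D, φ t = φ 0 + ∫ s in (0:ℝ)..t, v s) ∧
    (∀ᵐ t ∂(MeasureTheory.volume.restrict D), v t ∈ F (φ t))

/-- Safety: no solution starting in `Xo` ever reaches `Xu`. -/
def Safe (F : E → Set E) (Xo Xu : Set E) : Prop :=
  ∀ (φ : ℝ → E) (D : Set ℝ), IsSolutionOn F φ D → φ 0 ∈ Xo → ∀ t ∈ D, φ t ∉ Xu

/-- Forward invariance of `K`. -/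
def ForwardInvariant (F : E → Set E) (K : Set E) : Prop :=
  ∀ (φ : ℝ → E) (D : Set ℝ), IsSolutionOn F φ D → φ 0 ∈ K → ∀ t ∈ D, φ t ∈ K

/-- Image of a set under a set-valued map: `F(S) = ⋃_{y ∈ S} F(y)`. -/
def svImage (F : E → Set E) (S : Set E) : Set E := ⋃ y ∈ S, F y

/-- Right-hand side of the strongly perturbed system `Σ^s_ε`:
`conv (F (x + ε(x)𝔹)) + ε(x)𝔹`. -/
def strongPert (F : E → Set E) (ε : E → ℝ) (x : E) : Set E :=
  convexHull ℝ (svImage F (Metric.closedBall x (ε x))) + Metric.closedBall (0:E) (ε x)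

/-- Right-hand side of the (ordinary) perturbed system `Σ_ε`: `F x + ε(x)𝔹`. -/
def pert (F : E → Set E) (ε : E → ℝ) (x : E) : Set E :=
  F x + Metric.closedBall (0:E) (ε x)

def RobustlySafe (F : E → Set E) (Xo Xu : Set E) : Prop :=
  ∃ ε : E → ℝ, Continuous ε ∧ (∀ x, 0 < ε x) ∧ Safe (pert F ε) Xo Xu

def StronglyRobustlySafe (F : E → Set E) (Xo Xu : Set E) : Prop :=
  ∃ ε : E → ℝ, Continuous ε ∧ (∀ x, 0 < ε x) ∧ Safe (strongPert F ε) Xo Xu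

def UniformlyStronglyRobustlySafe (F : E → Set E) (Xo Xu : Set E) : Prop :=
  ∃ ε : ℝ, 0 < ε ∧ Safe (strongPert F (fun _ => ε)) Xo Xu

/-- Upper semicontinuity of a set-valued map. -/
def UpperSemicontinuousSV (F : E → Set E) : Prop :=
  ∀ x : E, ∀ U : Set E, IsOpen U → F x ⊆ U → ∀ᶠ y in nhds x, F y ⊆ U

/-- Lower semicontinuity of a set-valued map (sequential form). -/
def LowerSemicontinuousSV (F : E → Set E) : Prop :=
  ∀ x : E, ∀ y ∈ F x, ∀ u : ℕ → E, Filter.Tendsto u Filter.atTop (nhds x) →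
    ∃ v : ℕ → E, (∀ i, v i ∈ F (u i)) ∧ Filter.Tendsto v Filter.atTop (nhds y)


lemma bound_above (φ v : ℝ → ℝ) (c t1 : ℝ) (ht1 : 0 ≤ t1)
    (hint : IntegrableOn v (Set.Icc 0 t1))
    (hφ : ∀ t ∈ Set.Icc (0:ℝ) t1, φ t = φ 0 + ∫ s in (0:ℝ)..t, v s)
    (hv : ∀ᵐ t ∂(volume.restrict (Set.Icc (0:ℝ) t1)), c < φ t → v t ≤ 0)
    (h0 : φ 0 ≤ c) : φ t1 ≤ c := by
  by_contra hcon
  push_neg at hcon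
  have huIcc : Set.uIcc (0:ℝ) t1 = Set.Icc 0 t1 := Set.uIcc_of_le ht1
  have hcontI : ContinuousOn (fun t => ∫ s in (0:ℝ)..t, v s) (Set.Icc 0 t1) := by
    have := intervalIntegral.continuousOn_primitive_interval (μ := volume) (a := (0:ℝ))
      (b := t1) (f := v) (by rwa [huIcc])
    rwa [huIcc] at this
  have hcont : ContinuousOn φ (Set.Icc 0 t1) := by
    apply (continuousOn_const.add hcontI).congr
    intro t ht; exact (hφ t ht).trans rfl
  set S : Set ℝ := {t | t ∈ Set.Icc (0:ℝ) t1 ∧ φ t ≤ c} with hSdef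
  have h0S : (0:ℝ) ∈ S := ⟨Set.left_mem_Icc.2 ht1, h0⟩
  have hSne : S.Nonempty := ⟨0, h0S⟩
  have hbdd : BddAbove S := ⟨t1, fun x hx => hx.1.2⟩
  obtain ⟨m, hm⟩ : ∃ m, m = sSup S := ⟨_, rfl⟩
  have hm0 : 0 ≤ m := hm ▸ le_csSup hbdd h0S
  have hmle : m ≤ t1 := hm ▸ csSup_le hSne (fun x hx => hx.1.2)
  have hmIcc : m ∈ Set.Icc (0:ℝ) t1 := ⟨hm0, hmle⟩
  have hφm : φ m ≤ c := by
    have hclosure : m ∈ closure S := hm ▸ csSup_mem_closure hSne hbdd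
    have hne : (𝓝[S] m).NeBot := mem_closure_iff_nhdsWithin_neBot.1 hclosure
    have hct : ContinuousWithinAt φ S m := (hcont m hmIcc).mono (fun x hx => hx.1)
    exact le_of_tendsto hct (eventually_nhdsWithin_of_forall (fun x hx => hx.2))
  have hst : m < t1 := lt_of_le_of_ne hmle (fun he => absurd hcon (not_lt.2 (he ▸ hφm)))
  have hIoc : ∀ t ∈ Set.Ioc m t1, c < φ t := by
    intro t ht
    by_contra hc; push_neg at hc
    exact absurd (hm ▸ le_csSup hbdd ⟨⟨le_trans hm0 ht.1.le, ht.2⟩, hc⟩) (not_le.2 ht.1)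
  have hIntS : IntervalIntegrable v volume m t1 := by
    apply IntegrableOn.intervalIntegrable
    rw [Set.uIcc_of_le hst.le]
    exact hint.mono_set (Set.Icc_subset_Icc hm0 le_rfl)
  have hInt0s : IntervalIntegrable v volume 0 m := by
    apply IntegrableOn.intervalIntegrable
    rw [Set.uIcc_of_le hm0]
    exact hint.mono_set (Set.Icc_subset_Icc le_rfl hmle)
  have hintle : ∫ τ in m..t1, v τ ≤ 0 := by
    rw [intervalIntegral.integral_of_le hst.le]
    apply integral_nonpos_of_ae
    have h1 : ∀ᵐ t ∂(volume.restrict (Set.Icc m t1)), c < φ t → v t ≤ 0 :=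
      ae_restrict_of_ae_restrict_of_subset (Set.Icc_subset_Icc hm0 le_rfl) hv
    rw [← MeasureTheory.restrict_Ioc_eq_restrict_Icc] at h1
    filter_upwards [h1, self_mem_ae_restrict measurableSet_Ioc] with t h1t h2t
    exact h1t (hIoc t h2t)
  have hsum : φ t1 = φ m + ∫ τ in m..t1, v τ := by
    rw [hφ t1 ⟨ht1, le_rfl⟩, hφ m hmIcc,
      ← intervalIntegral.integral_add_adjacent_intervals hInt0s hIntS]
    ring
  linarith

lemma bound_below (φ v : ℝ → ℝ) (c t1 : ℝ) (ht1 : 0 ≤ t1)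
    (hint : IntegrableOn v (Set.Icc 0 t1))
    (hφ : ∀ t ∈ Set.Icc (0:ℝ) t1, φ t = φ 0 + ∫ s in (0:ℝ)..t, v s)
    (hv : ∀ᵐ t ∂(volume.restrict (Set.Icc (0:ℝ) t1)), φ t < c → 0 ≤ v t)
    (h0 : c ≤ φ 0) : c ≤ φ t1 := by
  have key := bound_above (fun t => -φ t) (fun t => -v t) (-c) t1 ht1 hint.neg ?_ ?_
      (show -φ 0 ≤ -c by linarith)
  · linarith [show -φ t1 ≤ -c from key]
  · intro t ht
    simp only [hφ t ht, intervalIntegral.integral_neg]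
    ring
  · filter_upwards [hv] with t h ht
    have : φ t < c := by simpa using ht
    simpa using h this

/-- The example of the paper: the one-dimensional system with `F(x) = {2}`
for `x < 0`, `F(0) = [-1, 2]`, `F(x) = {-1}` for `x > 0`, with `X_o = [-2, 0]` and
`X_u = ℝ \ X_o`, is robustly safe (with margin `1`) but not strongly robustly safe. -/
theorem stmt18 (F : ℝ → Set ℝ)
    (hF : F = fun x => if x < 0 then {2} else if x = 0 then Set.Icc (-1) 2 else {-1})
    (Xo Xu : Set ℝ) (hXo : Xo = Set.Icc (-2) 0) (hXu : Xu = Set.univ \ Set.Icc (-2) 0) :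
    (Safe (pert F (fun _ => 1)) Xo Xu ∧ RobustlySafe F Xo Xu) ∧
    ((∀ ε : ℝ → ℝ, Continuous ε → (∀ x, 0 < ε x) → ¬ Safe (strongPert F ε) Xo Xu) ∧
      ¬ StronglyRobustlySafe F Xo Xu) := by
  have keySafe : Safe (pert F (fun _ => 1)) Xo Xu := by
    rintro φ D ⟨hD, v, hint, hφ, hv⟩ h0 t ht hmem
    rw [hXo] at h0
    rw [hXu] at hmem
    have hsub : 0 ≤ t ∧ Set.Icc (0:ℝ) t ⊆ D := by
      rcases hD with ⟨T, hT, rfl⟩ | ⟨T, hT, rfl⟩ | rfl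
      · exact ⟨ht.1, Set.Icc_subset_Icc le_rfl ht.2⟩
      · exact ⟨ht.1, fun x hx => ⟨hx.1, lt_of_le_of_lt hx.2 ht.2⟩⟩
      · exact ⟨ht, fun x hx => hx.1⟩
    have hv' : ∀ᵐ τ ∂(volume.restrict (Set.Icc (0:ℝ) t)),
        ((0:ℝ) < φ τ → v τ ≤ 0) ∧ (φ τ < -2 → 0 ≤ v τ) := by
      apply ae_restrict_of_ae_restrict_of_subset hsub.2
      filter_upwards [hv] with τ hτ
      simp only [pert, hF] at hτ
      obtain ⟨a, ha, b, hb, hab⟩ := Set.mem_add.1 hτ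
      rw [mem_closedBall_zero_iff, Real.norm_eq_abs, abs_le] at hb
      constructor
      · intro hpos
        have h1 : ¬ (φ τ < 0) := by linarith
        have h2 : ¬ (φ τ = 0) := by intro h; rw [h] at hpos; exact lt_irrefl 0 hpos
        simp only [if_neg h1, if_neg h2, Set.mem_singleton_iff] at ha
        rw [ha] at hab
        linarith
      · intro hneg
        have h1 : φ τ < 0 := by linarith
        simp only [if_pos h1, Set.mem_singleton_iff] at ha
        rw [ha] at hab
        linarith
    have hub : φ t ≤ 0 :=
      bound_above φ v 0 t hsub.1 (hint t ht) (fun τ hτ => hφ τ (hsub.2 hτ))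
        (by filter_upwards [hv'] with τ h; exact h.1) h0.2
    have hlb : -2 ≤ φ t :=
      bound_below φ v (-2) t hsub.1 (hint t ht) (fun τ hτ => hφ τ (hsub.2 hτ))
        (by filter_upwards [hv'] with τ h; exact h.2) h0.1
    exact hmem.2 ⟨hlb, hub⟩
  have keyNot : ∀ ε : ℝ → ℝ, Continuous ε → (∀ x, 0 < ε x) → ¬ Safe (strongPert F ε) Xo Xu := by
    intro ε hc hp hsafe
    have hopen : IsOpen {x : ℝ | ε 0 / 2 < ε x} := isOpen_lt continuous_const hc
    obtain ⟨η, hη, hball⟩ := Metric.isOpen_iff.1 hopen 0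
      (show (0:ℝ) ∈ {x : ℝ | ε 0 / 2 < ε x} from half_lt_self (hp 0))
    set T := min η (ε 0 / 2) / 4 with hTdef
    have hT0 : 0 < T := by
      have := hp 0
      have h1 : 0 < min η (ε 0 / 2) := lt_min hη (by linarith)
      rw [hTdef]; linarith
    have hkey : ∀ x : ℝ, 0 ≤ x → x ≤ 2 * T → (2:ℝ) ∈ strongPert F ε x := by
      intro x hx0 hx2
      have hmin1 : min η (ε 0 / 2) ≤ η := min_le_left _ _
      have hmin2 : min η (ε 0 / 2) ≤ ε 0 / 2 := min_le_right _ _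
      have hxη : x < η := by rw [hTdef] at hx2; linarith
      have hεx : ε 0 / 2 < ε x := hball (by simpa [Metric.mem_ball, Real.dist_eq, sub_zero, abs_of_nonneg hx0] using hxη)
      have hxlt : x < ε x := by rw [hTdef] at hx2; linarith
      refine Set.mem_add.2 ⟨2, ?_, 0, mem_closedBall_self (hp x).le, by ring⟩
      apply subset_convexHull ℝ _
      apply Set.mem_iUnion₂.2
      refine ⟨x - ε x, ?_, ?_⟩
      · rw [Metric.mem_closedBall, Real.dist_eq,
          abs_of_nonpos (by linarith : x - ε x - x ≤ 0)]
        linarith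
      · rw [hF]
        simp only [if_pos (show x - ε x < 0 by linarith), Set.mem_singleton_iff]
    have hsol : IsSolutionOn (strongPert F ε) (fun t => 2 * t) (Set.Icc 0 T) := by
      refine ⟨Or.inl ⟨T, hT0.le, rfl⟩, fun _ => (2:ℝ), ?_, ?_, ?_⟩
      · intro t _
        exact integrableOn_const measure_Icc_lt_top.ne
      · intro t _
        simp [intervalIntegral.integral_const, smul_eq_mul]
        ring
      · rw [ae_restrict_iff' measurableSet_Icc]
        refine ae_of_all _ (fun τ hτ => ?_)
        exact hkey (2 * τ) (by linarith [hτ.1]) (by linarith [hτ.2])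
    have := hsafe (fun t => 2 * t) (Set.Icc 0 T) hsol
      (by rw [hXo]; constructor <;> norm_num) T (Set.right_mem_Icc.2 hT0.le)
    apply this
    rw [hXu]
    refine ⟨trivial, fun hIcc => ?_⟩
    have := hIcc.2
    have : 2 * T ≤ 0 := this
    linarith
  refine ⟨⟨keySafe, ⟨fun _ => 1, continuous_const, fun _ => one_pos, keySafe⟩⟩, keyNot, ?_⟩
  rintro ⟨ε, h1, h2, h3⟩
  exact keyNot ε h1 h2 h3
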